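/- Let S be a nonempty set, A a C*-algebra, s₀ ∈ S, and K, K' : S × S → A hermitian kernels. Define L(s,t) := (1/2)(K(s,t) − K(s,s₀) − K(s₀,t) + K(s₀,s₀)) and L'(s,t) := (1/2)(K'(s,t) − K'(s,s₀) − K'(s₀,t) + K'(s₀,s₀)). Then K − K' is conditionally positive definite if and only if L − L' is positive definite. -/

import Mathlib

/-- A kernel `K : S × S → A` is hermitian if `K (t, s) = K (s, t)*` for all `s, t`. -/
def IsHermitianKernel {S A : Type*} [Star A] (K : S → S → A) : Prop :=
  ∀ s t, K t s = star (K s t)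

/-- A kernel `L` with values in a C*-algebra is positive definite if for every `n ≥ 1`,
all `s₁, …, sₙ ∈ S` and all `a₁, …, aₙ ∈ A` one has `∑ᵢⱼ aᵢ* L(sᵢ, sⱼ) aⱼ ≥ 0`. -/
def IsPosDefKernel {S A : Type*} [NonUnitalCStarAlgebra A] [PartialOrder A]
    (L : S → S → A) : Prop :=
  ∀ (n : ℕ) (s : Fin n → S) (a : Fin n → A),
    0 ≤ ∑ i, ∑ j, star (a i) * L (s i) (s j) * a j

/-- A kernel `K` with values in a C*-algebra is conditionally positive definite if for every
`n ≥ 2`, all `s₁, …, sₙ ∈ S` and all `a₁, …, aₙ ∈ A` with `∑ᵢ aᵢ = 0` one has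
`∑ᵢⱼ aᵢ* K(sᵢ, sⱼ) aⱼ ≥ 0`. -/
def IsCondPosDefKernel {S A : Type*} [NonUnitalCStarAlgebra A] [PartialOrder A]
    (K : S → S → A) : Prop :=
  ∀ (n : ℕ), 2 ≤ n → ∀ (s : Fin n → S) (a : Fin n → A), (∑ i, a i) = 0 →
    0 ≤ ∑ i, ∑ j, star (a i) * K (s i) (s j) * a j

section Aux

variable {S A : Type*} [NonUnitalCStarAlgebra A] [PartialOrder A] [StarOrderedRing A]

/-- Nonnegative real scalar multiples of nonnegative elements are nonnegative. -/
lemma aux_smul_nonneg (r : ℝ) (hr : 0 ≤ r) {x : A} (hx : 0 ≤ x) : 0 ≤ (r : ℂ) • x := by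
  rw [StarOrderedRing.nonneg_iff] at hx ⊢
  induction hx using AddSubmonoid.closure_induction with
  | mem y hy =>
    obtain ⟨b, rfl⟩ := hy
    refine AddSubmonoid.subset_closure ⟨(Real.sqrt r : ℂ) • b, ?_⟩
    show star ((Real.sqrt r : ℂ) • b) * ((Real.sqrt r : ℂ) • b) = (r : ℂ) • (star b * b)
    rw [star_smul, smul_mul_smul_comm]
    congr 1
    rw [Complex.star_def, Complex.conj_ofReal, ← Complex.ofReal_mul, Real.mul_self_sqrt hr]
  | zero => simpa using AddSubmonoid.zero_mem _
  | add a b _ _ ha hb => rw [smul_add]; exact AddSubmonoid.add_mem _ ha hb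

/-- When `∑ a = 0`, the shifted kernel gives the same quadratic sums. -/
lemma aux_shift_eq (M : S → S → A) (s₀ : S) (n : ℕ) (s : Fin n → S) (a : Fin n → A)
    (ha : ∑ i, a i = 0) :
    ∑ i, ∑ j, star (a i) * (M (s i) (s j) - M (s i) s₀ - M s₀ (s j) + M s₀ s₀) * a j
      = ∑ i, ∑ j, star (a i) * M (s i) (s j) * a j := by
  have h1 : ∑ i, ∑ j, star (a i) * M (s i) s₀ * a j = 0 := by
    simp [← Finset.mul_sum, ha]
  have h2 : ∑ i, ∑ j, star (a i) * M s₀ (s j) * a j = 0 := by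
    have : ∑ i, ∑ j, star (a i) * M s₀ (s j) * a j
        = (∑ i, star (a i)) * ∑ j, M s₀ (s j) * a j := by
      rw [Finset.sum_mul]
      refine Finset.sum_congr rfl fun i _ => ?_
      rw [Finset.mul_sum]
      simp [mul_assoc]
    rw [this, ← star_sum, ha, star_zero, zero_mul]
  have h3 : ∑ i, ∑ j, star (a i) * M s₀ s₀ * a j = 0 := by
    simp [← Finset.mul_sum, ha]
  simp only [mul_sub, mul_add, sub_mul, add_mul, Finset.sum_sub_distrib,
    Finset.sum_add_distrib, h1, h2, h3]
  abel

/-- The extended quadratic sum (adding the point `s₀` with coefficient `-∑ a`)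
equals the quadratic sum of the shifted kernel. -/
lemma aux_extend_eq (M : S → S → A) (s₀ : S) (n : ℕ) (s : Fin n → S) (a : Fin n → A) :
    (let s' : Fin (n+1) → S := Fin.cons s₀ s
     let a' : Fin (n+1) → A := Fin.cons (-(∑ k, a k)) a
     ∑ i, ∑ j, star (a' i) * M (s' i) (s' j) * a' j)
      = ∑ i, ∑ j, star (a i) * (M (s i) (s j) - M (s i) s₀ - M s₀ (s j) + M s₀ s₀) * a j := by
  simp only [Fin.sum_univ_succ, Fin.cons_zero, Fin.cons_succ]
  simp only [mul_sub, mul_add, sub_mul, add_mul, Finset.sum_sub_distrib,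
    Finset.sum_add_distrib, star_neg, neg_mul, mul_neg, Finset.sum_neg_distrib,
    ← Finset.mul_sum, ← Finset.sum_mul, star_sum, mul_assoc]
  abel_nf

end Aux

/-- For hermitian kernels `K, K'` and their associated shifted kernels `L, L'` at `s₀`,
`K − K'` is conditionally positive definite iff `L − L'` is positive definite. -/
theorem sub_condPosDef_iff_sub_posDef {S A : Type*} [Nonempty S]
    [NonUnitalCStarAlgebra A] [PartialOrder A] [StarOrderedRing A] (s₀ : S)
    (K K' : S → S → A) (hK : IsHermitianKernel K) (hK' : IsHermitianKernel K')
    (L L' : S → S → A)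
    (hL : ∀ s t, L s t = (2⁻¹ : ℂ) • (K s t - K s s₀ - K s₀ t + K s₀ s₀))
    (hL' : ∀ s t, L' s t = (2⁻¹ : ℂ) • (K' s t - K' s s₀ - K' s₀ t + K' s₀ s₀)) :
    IsCondPosDefKernel (fun s t => K s t - K' s t) ↔
      IsPosDefKernel (fun s t => L s t - L' s t) := by
  set M : S → S → A := fun s t => K s t - K' s t with hM
  have hN : ∀ s t, L s t - L' s t
      = (2⁻¹ : ℂ) • (M s t - M s s₀ - M s₀ t + M s₀ s₀) := by
    intro s t
    rw [hL, hL', ← smul_sub]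
    congr 1
    simp only [hM]
    abel
  constructor
  · intro h n s a
    obtain _ | n := n
    · simp
    -- the extended configuration
    have key := aux_extend_eq M s₀ (n + 1) s a
    simp only at key
    have hsum : (∑ i, (Fin.cons (-(∑ k, a k)) a : Fin (n+1+1) → A) i) = 0 := by
      rw [Fin.sum_univ_succ]
      simp
    have hpos := h (n + 1 + 1) (by omega) (Fin.cons s₀ s) (Fin.cons (-(∑ k, a k)) a) hsum
    rw [key] at hpos
    have : ∑ i, ∑ j, star (a i) * (L (s i) (s j) - L' (s i) (s j)) * a j
        = (2⁻¹ : ℂ) • ∑ i, ∑ j,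
            star (a i) * (M (s i) (s j) - M (s i) s₀ - M s₀ (s j) + M s₀ s₀) * a j := by
      rw [Finset.smul_sum]
      refine Finset.sum_congr rfl fun i _ => ?_
      rw [Finset.smul_sum]
      refine Finset.sum_congr rfl fun j _ => ?_
      rw [hN, mul_smul_comm, smul_mul_assoc]
    rw [this]
    have h2 : ((2⁻¹ : ℝ) : ℂ) = (2⁻¹ : ℂ) := by push_cast; ring
    rw [← h2]
    exact aux_smul_nonneg _ (by norm_num) hpos
  · intro h n hn s a ha
    have key := aux_shift_eq M s₀ n s a ha
    have hX : ∀ s t : S, M s t - M s s₀ - M s₀ t + M s₀ s₀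
        = (2 : ℂ) • (L s t - L' s t) := by
      intro s t
      rw [hN, smul_smul]
      norm_num
    have : ∑ i, ∑ j, star (a i) * M (s i) (s j) * a j
        = (2 : ℂ) • ∑ i, ∑ j, star (a i) * (L (s i) (s j) - L' (s i) (s j)) * a j := by
      rw [← key, Finset.smul_sum]
      refine Finset.sum_congr rfl fun i _ => ?_
      rw [Finset.smul_sum]
      refine Finset.sum_congr rfl fun j _ => ?_
      rw [hX, mul_smul_comm, smul_mul_assoc]
    rw [this]
    have h2 : ((2 : ℝ) : ℂ) = (2 : ℂ) := by push_cast; ring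
    rw [← h2]
    exact aux_smul_nonneg _ (by norm_num) (h n s a)
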